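/- If T is a VOA(M, v) for a matroid M = (N, r) and S ⊆ N, then the deduplication of the subarray T(N\S) (the multiset of rows of T restricted to columns N\S, with each distinct row kept once) is a VOA(M\S, v), where M\S is the restriction of M to N\S with rank function r'(A) = r(A) for A ⊆ N\S. -/
import Mathlib


/-- Deletion of a VOA: if `T` is a `VOA(M, v)` and `S ⊆ N`, then the
deduplication of `T(N \ S)` (the set of distinct restrictions of the rows of
`T` to `N \ S`) is a `VOA(M \ S, v)`, where `M \ S` is the restriction of
`M` to `N \ S`. -/
theorem voa_deletion {α : Type*} [DecidableEq α]
    (N : Finset α) (r : Finset α → ℤ)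
    (h1 : ∀ A ⊆ N, 0 ≤ r A ∧ r A ≤ A.card)
    (h2 : ∀ A B : Finset α, A ⊆ B → B ⊆ N → r A ≤ r B)
    (h3 : ∀ A B : Finset α, A ⊆ N → B ⊆ N →
      r (A ∪ B) + r (A ∩ B) ≤ r A + r B)
    (v : ℕ) (hv : 2 ≤ v)
    (T : Fin (v ^ (r N).toNat) → α → Fin v)
    (hT : ∀ A ⊆ N, ∀ i,
      (Finset.univ.filter (fun j => ∀ a ∈ A, T j a = T i a)).card
        = v ^ (r N - r A).toNat)
    (S : Finset α) (hS : S ⊆ N) :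
    -- D is the deduplicated array of rows restricted to N \ S
    ∀ D : Finset ({x // x ∈ N \ S} → Fin v),
      D = Finset.univ.image
            (fun j : Fin (v ^ (r N).toNat) =>
              (fun a : {x // x ∈ N \ S} => T j (a : α))) →
      -- D has v^{r(N\S)} rows
      D.card = v ^ (r (N \ S)).toNat ∧
      -- and D satisfies the VOA condition for the restriction M \ S
      (∀ A ⊆ N \ S, ∀ g ∈ D,
        (D.filter (fun g' => ∀ a : {x // x ∈ N \ S},
            (a : α) ∈ A → g' a = g a)).card
          = v ^ (r (N \ S) - r A).toNat) := by
  intro D hD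
  classical
  set f : Fin (v ^ (r N).toNat) → ({x // x ∈ N \ S} → Fin v) :=
    fun j a => T j (a : α) with hf
  have hNS : N \ S ⊆ N := Finset.sdiff_subset
  have hvpos : 0 < v := lt_of_lt_of_le (by norm_num) hv
  have hcne : (v ^ (r N - r (N \ S)).toNat : ℕ) ≠ 0 := by positivity
  -- fibers of f all have the same size
  have hfib : ∀ j0, (Finset.univ.filter (fun j => f j = f j0)).card
      = v ^ (r N - r (N \ S)).toNat := by
    intro j0
    rw [← hT (N \ S) hNS j0]
    congr 1
    ext j
    simp only [Finset.mem_filter, Finset.mem_univ, true_and, funext_iff,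
      Subtype.forall, f]
  have hrNS0 : 0 ≤ r (N \ S) := (h1 _ hNS).1
  have hrNS : r (N \ S) ≤ r N := h2 _ _ hNS le_rfl
  -- first part
  have card1 : D.card * v ^ (r N - r (N \ S)).toNat = v ^ (r N).toNat := by
    have huniv : (Finset.univ : Finset (Fin (v ^ (r N).toNat))).card
        = v ^ (r N).toNat := by simp
    rw [← huniv, Finset.card_eq_sum_card_image f Finset.univ]
    rw [← hD]
    rw [Finset.sum_congr rfl (fun g' hg' => ?_), Finset.sum_const, smul_eq_mul]
    obtain ⟨j0, _, hj0⟩ := Finset.mem_image.mp (hD ▸ hg')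
    rw [← hj0]
    exact hfib j0
  have hexp1 : (r N).toNat = (r (N \ S)).toNat + (r N - r (N \ S)).toNat := by
    omega
  have hDcard : D.card = v ^ (r (N \ S)).toNat := by
    have : D.card * v ^ (r N - r (N \ S)).toNat
        = v ^ (r (N \ S)).toNat * v ^ (r N - r (N \ S)).toNat := by
      rw [card1, ← pow_add, ← hexp1]
    exact Nat.eq_of_mul_eq_mul_right (Nat.pos_of_ne_zero hcne) this
  refine ⟨hDcard, ?_⟩
  intro A hA g hg
  obtain ⟨i, -, hi⟩ := Finset.mem_image.mp (hD ▸ hg)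
  have hAN : A ⊆ N := hA.trans hNS
  -- key counting
  set P : ({x // x ∈ N \ S} → Fin v) → Prop :=
    fun g' => ∀ a : {x // x ∈ N \ S}, (a : α) ∈ A → g' a = g a with hP
  set E : Finset (Fin (v ^ (r N).toNat)) :=
    Finset.univ.filter (fun j => ∀ a ∈ A, T j a = T i a) with hE
  have himg : E.image f = D.filter P := by
    ext g'
    simp only [Finset.mem_image, Finset.mem_filter, hE, Finset.mem_univ,
      true_and]
    constructor
    · rintro ⟨j, hj, rfl⟩
      refine ⟨hD ▸ Finset.mem_image_of_mem f (Finset.mem_univ j), ?_⟩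
      rintro ⟨a, ha⟩ haA
      have := hj a haA
      simp only [f, this, ← hi]
    · rintro ⟨hg'D, hPg'⟩
      obtain ⟨j, -, rfl⟩ := Finset.mem_image.mp (hD ▸ hg'D)
      refine ⟨j, ?_, rfl⟩
      intro a haA
      have haNS : a ∈ N \ S := hA haA
      have := hPg' ⟨a, haNS⟩ haA
      have hgi : g ⟨a, haNS⟩ = T i a := by rw [← hi]
      simpa [f, hgi] using this
  have key : E.card = (D.filter P).card * v ^ (r N - r (N \ S)).toNat := by
    rw [Finset.card_eq_sum_card_image f E, himg]
    rw [Finset.sum_congr rfl (fun g' hg' => ?_), Finset.sum_const, smul_eq_mul]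
    rw [← himg] at hg'
    obtain ⟨j0, hj0E, hj0⟩ := Finset.mem_image.mp hg'
    have heq : E.filter (fun x => f x = g') = Finset.univ.filter (fun x => f x = g') := by
      ext j
      simp only [Finset.mem_filter, Finset.mem_univ, true_and, hE]
      constructor
      · rintro ⟨-, h⟩; exact h
      · intro h
        refine ⟨?_, h⟩
        intro a haA
        have haNS : a ∈ N \ S := hA haA
        have h1' : T j a = T j0 a := by
          have : f j ⟨a, haNS⟩ = f j0 ⟨a, haNS⟩ := by rw [h, hj0]
          simpa [f] using this
        have h2' : T j0 a = T i a := by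
          simp only [hE, Finset.mem_filter, Finset.mem_univ, true_and] at hj0E
          exact hj0E a haA
        rw [h1', h2']
    rw [heq, ← hj0, hfib j0]
  have hEcard : E.card = v ^ (r N - r A).toNat := hT A hAN i
  have hrA0 : 0 ≤ r A := (h1 _ hAN).1
  have hrA : r A ≤ r (N \ S) := h2 _ _ hA hNS
  have hexp2 : (r N - r A).toNat
      = (r (N \ S) - r A).toNat + (r N - r (N \ S)).toNat := by
    omega
  have : (D.filter P).card * v ^ (r N - r (N \ S)).toNat
      = v ^ (r (N \ S) - r A).toNat * v ^ (r N - r (N \ S)).toNat := by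
    rw [← key, hEcard, ← pow_add, ← hexp2]
  exact Nat.eq_of_mul_eq_mul_right (Nat.pos_of_ne_zero hcne) this
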